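/- arXiv:1210.8393 — 2 statements merged into one kernel-verified Lean document; each statement's English description precedes it below -/
import Mathlib

section
/- The map sending (α, β, γ) to z = e^{iα} sin γ / sin β is a bijection from the open simplex {(α, β, γ) ∈ (0,π)^3 : α + β + γ = π} onto the open upper half-plane {z ∈ ℂ : Im z > 0}. The inverse sends z to α = arg z, β = arg(1 − 1/z) = π − arg z − arg(1/(1−z)), γ = arg(1/(1−z)), where arg takes values in (0, π) for points in the upper half-plane. -/
open Real Complex

noncomputable def shapeMap (p : ℝ × ℝ × ℝ) : ℂ :=
  Complex.exp (p.1 * Complex.I) * ((Real.sin p.2.2 / Real.sin p.2.1 : ℝ) : ℂ)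

def shapeSimplex : Set (ℝ × ℝ × ℝ) :=
  {p | p.1 ∈ Set.Ioo 0 π ∧ p.2.1 ∈ Set.Ioo 0 π ∧ p.2.2 ∈ Set.Ioo 0 π ∧ p.1 + p.2.1 + p.2.2 = π}

namespace ShapeAux

lemma arg_mem_Ioo {z : ℂ} (h : 0 < z.im) : Complex.arg z ∈ Set.Ioo 0 π := by
  constructor
  · rcases lt_or_eq_of_le (Complex.arg_nonneg_iff.2 h.le) with h' | h'
    · exact h'
    · exact absurd (Complex.arg_eq_zero_iff.1 h'.symm).2 h.ne'
  · rcases lt_or_eq_of_le (Complex.arg_le_pi z) with h' | h'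
    · exact h'
    · exact absurd (Complex.arg_eq_pi_iff.1 h').2 h.ne'

lemma arg_aux {r θ : ℝ} (hr : 0 < r) (hθ : θ ∈ Set.Ioo 0 π) :
    Complex.arg ((r : ℂ) * Complex.exp ((θ : ℂ) * Complex.I)) = θ := by
  rw [Complex.exp_mul_I]
  exact Complex.arg_mul_cos_add_sin_mul_I hr ⟨by linarith [hθ.1, Real.pi_pos], hθ.2.le⟩

lemma csin_identity (a c : ℂ) :
    Complex.sin (a + c) - Complex.sin c * Complex.exp (a * Complex.I) =
      Complex.sin a * Complex.exp (-(c * Complex.I)) := by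
  simp only [Complex.sin, show -(a + c) * Complex.I = -(a * Complex.I) + -(c * Complex.I) by ring,
    show (a + c) * Complex.I = a * Complex.I + c * Complex.I by ring,
    show -c * Complex.I = -(c * Complex.I) by ring,
    show -a * Complex.I = -(a * Complex.I) by ring, Complex.exp_add, Complex.exp_neg]
  have ha := Complex.exp_ne_zero (a * Complex.I)
  have hc := Complex.exp_ne_zero (c * Complex.I)
  field_simp
  ring

lemma forward {α β γ : ℝ} (hα : α ∈ Set.Ioo 0 π) (hβ : β ∈ Set.Ioo 0 π)
    (hγ : γ ∈ Set.Ioo 0 π) (hs : α + β + γ = π) :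
    shapeMap (α, β, γ) = ((Real.sin γ / Real.sin β : ℝ) : ℂ) * Complex.exp ((α : ℂ) * Complex.I) ∧
    1 - shapeMap (α, β, γ) =
      ((Real.sin α / Real.sin β : ℝ) : ℂ) * Complex.exp (-((γ : ℂ) * Complex.I)) ∧
    1 - 1 / shapeMap (α, β, γ) =
      ((Real.sin α / Real.sin γ : ℝ) : ℂ) * Complex.exp ((β : ℂ) * Complex.I) ∧
    1 / (1 - shapeMap (α, β, γ)) =
      ((Real.sin β / Real.sin α : ℝ) : ℂ) * Complex.exp ((γ : ℂ) * Complex.I) := by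
  have sa := Real.sin_pos_of_pos_of_lt_pi hα.1 hα.2
  have sb := Real.sin_pos_of_pos_of_lt_pi hβ.1 hβ.2
  have sc := Real.sin_pos_of_pos_of_lt_pi hγ.1 hγ.2
  have hsa : (Real.sin α : ℂ) ≠ 0 := by exact_mod_cast sa.ne'
  have hsb : (Real.sin β : ℂ) ≠ 0 := by exact_mod_cast sb.ne'
  have hsc : (Real.sin γ : ℂ) ≠ 0 := by exact_mod_cast sc.ne'
  have hsa' : Complex.sin (α:ℂ) ≠ 0 := by rw [← Complex.ofReal_sin]; exact hsa
  have hsb' : Complex.sin (β:ℂ) ≠ 0 := by rw [← Complex.ofReal_sin]; exact hsb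
  have hsc' : Complex.sin (γ:ℂ) ≠ 0 := by rw [← Complex.ofReal_sin]; exact hsc
  have hb : Real.sin β = Real.sin (α + γ) := by
    rw [show β = π - (α + γ) by linarith, Real.sin_pi_sub]
  set z := shapeMap (α, β, γ) with hzdef
  have h1 : z = ((Real.sin γ / Real.sin β : ℝ) : ℂ) * Complex.exp ((α : ℂ) * Complex.I) :=
    mul_comm _ _
  have key1 : (Real.sin β : ℂ) * (1 - z) =
      (Real.sin α : ℂ) * Complex.exp (-((γ : ℂ) * Complex.I)) := by
    rw [h1, mul_sub, mul_one]
    have h2 : (Real.sin β : ℂ) *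
        (((Real.sin γ / Real.sin β : ℝ) : ℂ) * Complex.exp ((α : ℂ) * Complex.I)) =
        (Real.sin γ : ℂ) * Complex.exp ((α : ℂ) * Complex.I) := by
      rw [Complex.ofReal_div]
      field_simp
    rw [h2]
    nth_rewrite 1 [hb]
    simp only [Complex.ofReal_sin, Complex.ofReal_add]
    exact csin_identity _ _
  have e1 : 1 - z = ((Real.sin α / Real.sin β : ℝ) : ℂ) * Complex.exp (-((γ : ℂ) * Complex.I)) := by
    rw [Complex.ofReal_div, div_mul_eq_mul_div, eq_div_iff hsb]
    linear_combination key1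
  have hz0 : z ≠ 0 := by
    rw [h1]
    exact mul_ne_zero (Complex.ofReal_ne_zero.2 (div_pos sc sb).ne') (Complex.exp_ne_zero _)
  refine ⟨h1, e1, ?_, ?_⟩
  · have h2 : 1 - 1 / z = -(1 - z) * z⁻¹ := by field_simp; ring
    have hexp : Complex.exp ((β : ℂ) * Complex.I) =
        Complex.exp ((π : ℝ) * Complex.I) *
          (Complex.exp (-((α : ℂ) * Complex.I)) * Complex.exp (-((γ : ℂ) * Complex.I))) := by
      rw [← Complex.exp_add, ← Complex.exp_add]
      congr 1
      have hβ' : (β : ℝ) = π - α - γ := by linarith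
      rw [hβ']
      push_cast
      ring
    rw [h2, e1, h1, mul_inv, ← Complex.exp_neg, hexp, Complex.exp_pi_mul_I]
    push_cast
    field_simp
  · rw [e1]
    push_cast
    rw [one_div, mul_inv, ← Complex.exp_neg, neg_neg, inv_div]

lemma forward_all {p : ℝ × ℝ × ℝ} (hp : p ∈ shapeSimplex) :
    p.1 = Complex.arg (shapeMap p) ∧
    p.2.1 = Complex.arg (1 - 1 / shapeMap p) ∧
    p.2.2 = Complex.arg (1 / (1 - shapeMap p)) := by
  obtain ⟨α, β, γ⟩ := p
  obtain ⟨hα, hβ, hγ, hs⟩ := hp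
  obtain ⟨h1, e1, e2, e3⟩ := forward hα hβ hγ hs
  have sa := Real.sin_pos_of_pos_of_lt_pi hα.1 hα.2
  have sb := Real.sin_pos_of_pos_of_lt_pi hβ.1 hβ.2
  have sc := Real.sin_pos_of_pos_of_lt_pi hγ.1 hγ.2
  refine ⟨?_, ?_, ?_⟩
  · rw [h1, arg_aux (div_pos sc sb) hα]
  · rw [e2, arg_aux (div_pos sa sc) hβ]
  · rw [e3, arg_aux (div_pos sb sa) hγ]

lemma mapsto {p : ℝ × ℝ × ℝ} (hp : p ∈ shapeSimplex) : 0 < (shapeMap p).im := by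
  obtain ⟨α, β, γ⟩ := p
  obtain ⟨hα, hβ, hγ, hs⟩ := hp
  obtain ⟨h1, -, -, -⟩ := forward hα hβ hγ hs
  have sa := Real.sin_pos_of_pos_of_lt_pi hα.1 hα.2
  have sb := Real.sin_pos_of_pos_of_lt_pi hβ.1 hβ.2
  have sc := Real.sin_pos_of_pos_of_lt_pi hγ.1 hγ.2
  rw [h1]
  simp only [Complex.mul_im, Complex.ofReal_re, Complex.ofReal_im,
    Complex.exp_ofReal_mul_I_im, Complex.exp_ofReal_mul_I_re, zero_mul, add_zero]
  exact mul_pos (div_pos sc sb) sa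

lemma surj {z : ℂ} (hz : 0 < z.im) : ∃ p ∈ shapeSimplex, shapeMap p = z := by
  have hz0 : z ≠ 0 := by intro h; rw [h] at hz; simp at hz
  have h1z : (1 : ℂ) - z ≠ 0 := by
    intro h
    have hz1 : z = 1 := by linear_combination -h
    rw [hz1] at hz; simp at hz
  have hA : 0 < ‖z‖ := norm_pos_iff.2 hz0
  have hB : 0 < ‖1 - z‖ := norm_pos_iff.2 h1z
  have hw2 : 0 < (1 - 1 / z).im := by
    rw [one_div, Complex.sub_im, Complex.one_im, Complex.inv_im, Complex.normSq_eq_norm_sq]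
    have h : 0 - -z.im / (‖z‖) ^ 2 = z.im / (‖z‖) ^ 2 := by ring
    rw [h]
    exact div_pos hz (pow_pos hA 2)
  have hw3 : 0 < (1 / (1 - z)).im := by
    rw [one_div, Complex.inv_im, Complex.sub_im, Complex.one_im, Complex.normSq_eq_norm_sq]
    have h : -(0 - z.im) / (‖1 - z‖) ^ 2 = z.im / (‖1 - z‖) ^ 2 := by
      ring
    rw [h]
    exact div_pos hz (pow_pos hB 2)
  have h2ne : (1 - 1 / z) ≠ 0 := fun h => by rw [h] at hw2; simp at hw2
  have h3ne : (1 / (1 - z)) ≠ 0 := fun h => by rw [h] at hw3; simp at hw3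
  have hαm := arg_mem_Ioo hz
  have hβm := arg_mem_Ioo hw2
  have hγm := arg_mem_Ioo hw3
  have hprod : z * (1 - 1 / z) * (1 / (1 - z)) = -1 := by
    field_simp
    ring
  have hang : ((Complex.arg z + Complex.arg (1 - 1 / z) + Complex.arg (1 / (1 - z)) : ℝ) :
      Real.Angle) = ((π : ℝ) : Real.Angle) := by
    have h := Complex.arg_mul_coe_angle (mul_ne_zero hz0 h2ne) h3ne
    rw [Complex.arg_mul_coe_angle hz0 h2ne, hprod, Complex.arg_neg_one] at h
    rw [Real.Angle.coe_add, Real.Angle.coe_add]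
    exact h.symm
  obtain ⟨k, hk⟩ := Real.Angle.angle_eq_iff_two_pi_dvd_sub.1 hang
  have hk0 : k = 0 := by
    have h1 : (k : ℝ) < 1 := by nlinarith [Real.pi_pos, hαm.2, hβm.2, hγm.2]
    have h2 : (-1 : ℝ) < (k : ℝ) := by nlinarith [Real.pi_pos, hαm.1, hβm.1, hγm.1]
    have h1' : k < 1 := by exact_mod_cast h1
    have h2' : -1 < k := by exact_mod_cast h2
    omega
  rw [hk0] at hk
  push_cast at hk
  have hsum : Complex.arg z + Complex.arg (1 - 1 / z) + Complex.arg (1 / (1 - z)) = π := by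
    linarith
  have hsγ : Real.sin (Complex.arg (1 / (1 - z))) = z.im / ‖1 - z‖ := by
    rw [Complex.sin_arg, one_div, Complex.inv_im, Complex.sub_im, Complex.one_im,
      Complex.normSq_eq_norm_sq, norm_inv]
    field_simp
    ring
  have hsβ : Real.sin (Complex.arg (1 - 1 / z)) =
      z.im / (‖z‖ * ‖1 - z‖) := by
    rw [Complex.sin_arg]
    have him : (1 - 1 / z).im = z.im / (‖z‖) ^ 2 := by
      rw [one_div, Complex.sub_im, Complex.one_im, Complex.inv_im, Complex.normSq_eq_norm_sq]
      ring
    have hne : 1 - 1 / z = (z - 1) / z := by field_simp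
    have habs : ‖1 - 1 / z‖ = ‖1 - z‖ / ‖z‖ := by
      rw [hne, norm_div, norm_sub_rev]
    rw [him, habs]
    field_simp
  have hratio : Real.sin (Complex.arg (1 / (1 - z))) / Real.sin (Complex.arg (1 - 1 / z)) =
      ‖z‖ := by
    rw [hsγ, hsβ]
    have ht : z.im ≠ 0 := hz.ne'
    field_simp
  refine ⟨(Complex.arg z, Complex.arg (1 - 1 / z), Complex.arg (1 / (1 - z))),
    ⟨hαm, hβm, hγm, hsum⟩, ?_⟩
  simp only [shapeMap]
  rw [hratio, mul_comm, Complex.norm_mul_exp_arg_mul_I]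

end ShapeAux

theorem stmt_7 :
    Set.BijOn shapeMap shapeSimplex {z : ℂ | 0 < z.im} ∧
    ∀ p ∈ shapeSimplex,
      p.1 = Complex.arg (shapeMap p) ∧
      p.2.1 = Complex.arg (1 - 1 / shapeMap p) ∧
      p.2.2 = Complex.arg (1 / (1 - shapeMap p)) := by
  constructor
  · refine ⟨fun p hp => ShapeAux.mapsto hp, fun p hp q hq h => ?_, fun z hz => ?_⟩
    · obtain ⟨a1, a2, a3⟩ := ShapeAux.forward_all hp
      obtain ⟨b1, b2, b3⟩ := ShapeAux.forward_all hq
      rw [h] at a1 a2 a3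
      exact Prod.ext_iff.2 ⟨a1.trans b1.symm, Prod.ext_iff.2 ⟨a2.trans b2.symm, a3.trans b3.symm⟩⟩
    · obtain ⟨p, hp, hpz⟩ := ShapeAux.surj hz
      exact ⟨p, hp, hpz⟩
  · exact fun p hp => ShapeAux.forward_all hp
end

section
/- Define the Lobachevsky function Λ(θ) = −∫_0^θ ln|2 sin t| dt for θ ∈ ℝ, and let V(α, β) = Λ(α) + Λ(β) + Λ(π − α − β) on the open triangle D = {(α, β) : α > 0, β > 0, α + β < π}. Then V is strictly concave on D. -/
open Real MeasureTheory Set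

noncomputable def lobachevsky (θ : ℝ) : ℝ := -∫ t in (0 : ℝ)..θ, Real.log |2 * Real.sin t|

noncomputable def idealVol (p : ℝ × ℝ) : ℝ :=
  lobachevsky p.1 + lobachevsky p.2 + lobachevsky (π - p.1 - p.2)

def angleTriangle : Set (ℝ × ℝ) := {p | 0 < p.1 ∧ 0 < p.2 ∧ p.1 + p.2 < π}

lemma integrableOn_log_Ioc {b : ℝ} (hb : 0 < b) :
    IntegrableOn Real.log (Set.Ioc 0 b) := by
  have key : ∀ c : ℝ, 0 < c → c ≤ 1 → IntegrableOn Real.log (Set.Ioc 0 c) := by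
    intro c hc hc1
    have h : IntegrableOn (fun x : ℝ => -Real.log x) (Set.Ioc 0 c) := by
      apply intervalIntegral.integrableOn_deriv_of_nonneg
        (g := fun x : ℝ => x - x * Real.log x)
      · exact (continuous_id.sub continuous_mul_log).continuousOn
      · intro x hx
        have h1 : HasDerivAt (fun x : ℝ => x * Real.log x) (Real.log x + 1) x := by
          have h2 := ((hasDerivAt_id x).mul (Real.hasDerivAt_log hx.1.ne'))
          refine h2.congr_deriv ?_
          simp only [id_eq, mul_inv_cancel₀ hx.1.ne']
          ring
        have := (hasDerivAt_id x).sub h1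
        refine this.congr_deriv ?_
        ring
      · intro x hx
        simp only [neg_nonneg]
        exact Real.log_nonpos hx.1.le (le_trans hx.2.le hc1)
    have h2 := h.neg
    exact h2.congr (Filter.Eventually.of_forall fun x => by simp)
  rcases le_or_gt b 1 with h1 | h1
  · exact key b hb h1
  · have : Set.Ioc (0:ℝ) b = Set.Ioc 0 1 ∪ Set.Ioc 1 b := by
      rw [Set.Ioc_union_Ioc_eq_Ioc zero_le_one h1.le]
    rw [this]
    exact (key 1 one_pos le_rfl).union
      ((Real.continuousOn_log.mono (by intro x hx; simp at hx ⊢; linarith [hx.1])).integrableOn_compact isCompact_Icc |>.mono_set Set.Ioc_subset_Icc_self)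

lemma integrableOn_logsin {θ : ℝ} (h0 : 0 < θ) (hπ : θ < π) :
    IntegrableOn (fun t => Real.log |2 * Real.sin t|) (Set.Ioc 0 θ) := by
  have meas : AEStronglyMeasurable (fun t => Real.log |2 * Real.sin t|)
      (volume.restrict (Set.Ioc (0:ℝ) θ)) :=
    (Real.measurable_log.comp ((measurable_const.mul Real.measurable_sin).abs)).aestronglyMeasurable
  have key : ∀ c : ℝ, 0 < c → c ≤ π / 2 →
      IntegrableOn (fun t => Real.log |2 * Real.sin t|) (Set.Ioc 0 c) := by
    intro c hc hc2
    have hint : IntegrableOn (fun t => |Real.log t| + Real.log 2) (Set.Ioc 0 c) :=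
      ((integrableOn_log_Ioc hc).abs).add (integrableOn_const (by simp [hc]))
    refine Integrable.mono hint
      ((Real.measurable_log.comp ((measurable_const.mul Real.measurable_sin).abs)).aestronglyMeasurable) ?_
    refine (ae_restrict_iff' measurableSet_Ioc).2 (Filter.Eventually.of_forall fun t ht => ?_)
    have ht0 : 0 < t := ht.1
    have htc : t ≤ π / 2 := ht.2.trans hc2
    have hsinpos : 0 < Real.sin t := Real.sin_pos_of_pos_of_lt_pi ht0 (lt_of_le_of_lt htc (by linarith [Real.pi_pos]))
    have hup : Real.sin t < t := Real.sin_lt ht0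
    have hlow : t / 2 ≤ Real.sin t := by
      have hm := Real.mul_le_sin ht0.le htc
      have h4 : (1:ℝ)/2 ≤ 2/π := by
        rw [le_div_iff₀ Real.pi_pos]; nlinarith [Real.pi_le_four]
      nlinarith
    have habs : |2 * Real.sin t| = 2 * Real.sin t := abs_of_pos (by linarith)
    rw [Real.norm_eq_abs, habs]
    -- log (2 sin t) = log t + log (2 sin t / t)
    have hlog : Real.log (2 * Real.sin t) = Real.log t + Real.log (2 * Real.sin t / t) := by
      rw [← Real.log_mul ht0.ne' (by positivity)]
      congr 1
      field_simp
    have hb1 : (1:ℝ) ≤ 2 * Real.sin t / t := by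
      rw [le_div_iff₀ ht0]; linarith
    have hb2 : 2 * Real.sin t / t ≤ 2 := by
      rw [div_le_iff₀ ht0]; nlinarith
    have h1 : 0 ≤ Real.log (2 * Real.sin t / t) := Real.log_nonneg hb1
    have h2 : Real.log (2 * Real.sin t / t) ≤ Real.log 2 :=
      Real.log_le_log (by linarith) hb2
    rw [hlog]
    rw [Real.norm_eq_abs]
    calc |Real.log t + Real.log (2 * Real.sin t / t)|
        ≤ |Real.log t| + |Real.log (2 * Real.sin t / t)| := abs_add_le _ _
      _ ≤ |Real.log t| + Real.log 2 := by
          rw [abs_of_nonneg h1]; linarith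
      _ ≤ ‖|Real.log t| + Real.log 2‖ := le_abs_self _
  rcases le_or_gt θ (π / 2) with h1 | h1
  · exact key θ h0 h1
  · have hsplit : Set.Ioc (0:ℝ) θ = Set.Ioc 0 (π/2) ∪ Set.Ioc (π/2) θ := by
      rw [Set.Ioc_union_Ioc_eq_Ioc (by positivity) h1.le]
    rw [hsplit]
    refine (key (π/2) (by positivity) le_rfl).union ?_
    refine (ContinuousOn.integrableOn_compact isCompact_Icc ?_).mono_set Set.Ioc_subset_Icc_self
    refine ContinuousOn.log (by fun_prop) ?_
    intro x hx
    have : 0 < Real.sin x := Real.sin_pos_of_pos_of_lt_pi (lt_of_lt_of_le (by positivity) hx.1) (lt_of_le_of_lt hx.2 hπ)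
    simp only [abs_ne_zero]
    positivity

lemma intervalIntegrable_logsin2 {θ : ℝ} (h0 : 0 < θ) (hπ : θ < π) :
    IntervalIntegrable (fun t => Real.log |2 * Real.sin t|) volume 0 θ := by
  rw [intervalIntegrable_iff_integrableOn_Ioc_of_le h0.le]
  exact integrableOn_logsin h0 hπ

lemma hasDerivAt_lobachevsky {θ : ℝ} (h0 : 0 < θ) (hπ : θ < π) :
    HasDerivAt lobachevsky (-Real.log (2 * Real.sin θ)) θ := by
  have hsin : 0 < Real.sin θ := Real.sin_pos_of_pos_of_lt_pi h0 hπ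
  have hcont : ContinuousAt (fun t => Real.log |2 * Real.sin t|) θ := by
    apply ContinuousAt.log
    · exact ((continuous_const.mul Real.continuous_sin).abs).continuousAt
    · simp only [abs_ne_zero]
      positivity
  have hmeas : StronglyMeasurableAtFilter (fun t => Real.log |2 * Real.sin t|) (nhds θ) :=
    ((Real.measurable_log.comp
      ((measurable_const.mul Real.measurable_sin).abs)).aestronglyMeasurable).stronglyMeasurableAtFilter
  have h := intervalIntegral.integral_hasDerivAt_right
    (intervalIntegrable_logsin2 h0 hπ) hmeas hcont
  have h2 := h.neg
  refine h2.congr_deriv ?_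
  rw [abs_of_pos (by positivity)]

lemma hasDerivAt_neg_log_two_sin {x : ℝ} (h0 : 0 < x) (hπ : x < π) :
    HasDerivAt (fun y => -Real.log (2 * Real.sin y)) (-(Real.cos x / Real.sin x)) x := by
  have hsin : 0 < Real.sin x := Real.sin_pos_of_pos_of_lt_pi h0 hπ
  have h1 : HasDerivAt (fun y => 2 * Real.sin y) (2 * Real.cos x) x :=
    (Real.hasDerivAt_sin x).const_mul 2
  have h2 := (h1.log (by positivity)).neg
  refine h2.congr_deriv ?_
  field_simp

lemma quad_pos {A B u v : ℝ} (hA : 0 < A) (hB : 0 < B) (hAB : A + B < π)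
    (huv : u ≠ 0 ∨ v ≠ 0) :
    0 < u^2 * (Real.cos A / Real.sin A) + v^2 * (Real.cos B / Real.sin B)
      + (u+v)^2 * (Real.cos (π - A - B) / Real.sin (π - A - B)) := by
  obtain ⟨C, hC⟩ : ∃ C, C = π - A - B := ⟨_, rfl⟩
  rw [← hC]
  have hsA : 0 < Real.sin A := Real.sin_pos_of_pos_of_lt_pi hA (by linarith)
  have hsB : 0 < Real.sin B := Real.sin_pos_of_pos_of_lt_pi hB (by linarith)
  have hsC : 0 < Real.sin C := Real.sin_pos_of_pos_of_lt_pi (by rw [hC]; linarith) (by rw [hC]; linarith)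
  have hsinB : Real.sin B = Real.sin A * Real.cos C + Real.cos A * Real.sin C := by
    have h : B = π - (A + C) := by rw [hC]; ring
    rw [h, Real.sin_pi_sub, Real.sin_add]
  have hsinA : Real.sin A = Real.sin B * Real.cos C + Real.cos B * Real.sin C := by
    have h : A = π - (B + C) := by rw [hC]; ring
    rw [h, Real.sin_pi_sub, Real.sin_add]
  obtain ⟨p, hpdef⟩ : ∃ p, p = Real.cos A / Real.sin A + Real.cos C / Real.sin C := ⟨_, rfl⟩
  obtain ⟨q, hqdef⟩ : ∃ q, q = Real.cos C / Real.sin C := ⟨_, rfl⟩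
  obtain ⟨r, hrdef⟩ : ∃ r, r = Real.cos B / Real.sin B + Real.cos C / Real.sin C := ⟨_, rfl⟩
  have hp : p = Real.sin B / (Real.sin A * Real.sin C) := by
    rw [hpdef, div_add_div _ _ hsA.ne' hsC.ne']
    rw [hsinB]; ring_nf
  have hr : r = Real.sin A / (Real.sin B * Real.sin C) := by
    rw [hrdef, div_add_div _ _ hsB.ne' hsC.ne']
    rw [hsinA]; ring_nf
  have hppos : 0 < p := by rw [hp]; positivity
  have h3 : p * r - q^2 = 1 := by
    rw [hp, hr, hqdef]
    have hpy := Real.sin_sq_add_cos_sq C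
    field_simp
    linear_combination (-1) * hpy
  have hQeq : u^2 * (Real.cos A / Real.sin A) + v^2 * (Real.cos B / Real.sin B)
      + (u+v)^2 * (Real.cos C / Real.sin C) = p*u^2 + 2*q*u*v + r*v^2 := by
    rw [hpdef, hqdef, hrdef]; ring
  have hpos : 0 < (p*u + q*v)^2 + v^2 := by
    rcases eq_or_ne v 0 with hv | hv
    · have hu : u ≠ 0 := by tauto
      have hpu : p * u ≠ 0 := mul_ne_zero hppos.ne' hu
      subst hv
      simp only [mul_zero, add_zero, ne_eq, OfNat.ofNat_ne_zero, not_false_eq_true, zero_pow]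
      positivity
    · positivity
  rw [hQeq]
  have heq : p*u^2 + 2*q*u*v + r*v^2 = ((p*u + q*v)^2 + v^2) / p := by
    rw [eq_div_iff hppos.ne']; linear_combination v^2 * h3
  rw [heq]
  positivity

lemma comb_pos {a b s t : ℝ} (ha : 0 ≤ a) (hb : 0 ≤ b) (hab : a + b = 1)
    (hs : 0 < s) (ht : 0 < t) : 0 < a * s + b * t := by
  rcases eq_or_lt_of_le ha with h | h
  · have : b = 1 := by linarith
    subst this; rw [← h]; simpa
  · nlinarith

lemma comb_lt {a b s t c : ℝ} (ha : 0 ≤ a) (hb : 0 ≤ b) (hab : a + b = 1)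
    (hs : s < c) (ht : t < c) : a * s + b * t < c := by
  rcases eq_or_lt_of_le ha with h | h
  · have hb1 : b = 1 := by linarith
    subst hb1; rw [← h]; simpa
  · have h1 := mul_lt_mul_of_pos_left hs h
    have h2 := mul_le_mul_of_nonneg_left ht.le hb
    have h3 : a * c + b * c = c := by linear_combination c * hab
    linarith

lemma convex_angleTriangle : Convex ℝ angleTriangle := by
  intro x hx y hy a b ha hb hab
  obtain ⟨hx1, hx2, hx3⟩ := hx
  obtain ⟨hy1, hy2, hy3⟩ := hy
  refine ⟨?_, ?_, ?_⟩ <;>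
    simp only [Prod.fst_add, Prod.snd_add, Prod.smul_fst, Prod.smul_snd, smul_eq_mul]
  · exact comb_pos ha hb hab hx1 hy1
  · exact comb_pos ha hb hab hx2 hy2
  · have := comb_lt ha hb hab hx3 hy3
    linarith [this]

theorem stmt_18 : StrictConcaveOn ℝ angleTriangle idealVol := by
  refine ⟨convex_angleTriangle, ?_⟩
  intro x hx y hy hxy a b ha hb hab
  obtain ⟨hx1, hx2, hx3⟩ := hx
  obtain ⟨hy1, hy2, hy3⟩ := hy
  set u := y.1 - x.1 with hu
  set v := y.2 - x.2 with hv
  have huv : u ≠ 0 ∨ v ≠ 0 := by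
    by_contra h
    push_neg at h
    apply hxy
    have h1 : x.1 = y.1 := by have := h.1; rw [hu] at this; linarith [sub_eq_zero.mp this]
    have h2 : x.2 = y.2 := by have := h.2; rw [hv] at this; linarith [sub_eq_zero.mp this]
    exact Prod.ext h1 h2
  set g : ℝ → ℝ := fun t =>
    lobachevsky (x.1 + t*u) + lobachevsky (x.2 + t*v)
      + lobachevsky (π - (x.1 + t*u) - (x.2 + t*v)) with hg
  set G1 : ℝ → ℝ := fun t =>
    (-Real.log (2 * Real.sin (x.1 + t*u))) * u + (-Real.log (2 * Real.sin (x.2 + t*v))) * v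
      + (-Real.log (2 * Real.sin (π - (x.1 + t*u) - (x.2 + t*v)))) * (-u - v) with hG1
  -- angle bounds along the segment
  have hang : ∀ t ∈ Icc (0:ℝ) 1, 0 < x.1 + t*u ∧ 0 < x.2 + t*v
      ∧ (x.1 + t*u) + (x.2 + t*v) < π := by
    intro t ht
    have e1 : x.1 + t*u = (1-t) * x.1 + t * y.1 := by rw [hu]; ring
    have e2 : x.2 + t*v = (1-t) * x.2 + t * y.2 := by rw [hv]; ring
    refine ⟨?_, ?_, ?_⟩
    · rw [e1]; exact comb_pos (by linarith [ht.2]) ht.1 (by ring) hx1 hy1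
    · rw [e2]; exact comb_pos (by linarith [ht.2]) ht.1 (by ring) hx2 hy2
    · rw [e1, e2]
      have := comb_lt (a := 1-t) (b := t) (by linarith [ht.2]) ht.1 (by ring) hx3 hy3
      linarith
  -- inner function derivatives
  have hinA : ∀ t : ℝ, HasDerivAt (fun s => x.1 + s*u) u t := by
    intro t
    simpa using (hasDerivAt_mul_const u).const_add x.1 (x := t)
  have hinB : ∀ t : ℝ, HasDerivAt (fun s => x.2 + s*v) v t := by
    intro t
    simpa using (hasDerivAt_mul_const v).const_add x.2 (x := t)
  have hinC : ∀ t : ℝ, HasDerivAt (fun s => π - (x.1 + s*u) - (x.2 + s*v)) (-u - v) t := by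
    intro t
    have h := ((hinA t).add (hinB t)).const_sub π
    have : (fun s => π - (x.1 + s*u) - (x.2 + s*v))
        = fun s => π - ((x.1 + s*u) + (x.2 + s*v)) := by funext s; ring
    rw [this]
    refine h.congr_deriv ?_
    ring
  -- first derivative of g
  have hg' : ∀ t ∈ Icc (0:ℝ) 1, HasDerivAt g (G1 t) t := by
    intro t ht
    obtain ⟨hA, hB, hC⟩ := hang t ht
    have d1 := (hasDerivAt_lobachevsky hA (by linarith)).comp t (hinA t)
    have d2 := (hasDerivAt_lobachevsky hB (by linarith)).comp t (hinB t)
    have hC0 : 0 < π - (x.1 + t*u) - (x.2 + t*v) := by linarith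
    have hCπ : π - (x.1 + t*u) - (x.2 + t*v) < π := by linarith
    have d3 := (hasDerivAt_lobachevsky hC0 hCπ).comp t (hinC t)
    exact (d1.add d2).add d3
  -- second derivative of G1
  have hG1' : ∀ t ∈ Icc (0:ℝ) 1, HasDerivAt G1
      ((-(Real.cos (x.1 + t*u) / Real.sin (x.1 + t*u))) * u * u
        + (-(Real.cos (x.2 + t*v) / Real.sin (x.2 + t*v))) * v * v
        + (-(Real.cos (π - (x.1 + t*u) - (x.2 + t*v)) / Real.sin (π - (x.1 + t*u) - (x.2 + t*v))))
          * (-u - v) * (-u - v)) t := by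
    intro t ht
    obtain ⟨hA, hB, hC⟩ := hang t ht
    have hC0 : 0 < π - (x.1 + t*u) - (x.2 + t*v) := by linarith
    have hCπ : π - (x.1 + t*u) - (x.2 + t*v) < π := by linarith
    have d1 := ((hasDerivAt_neg_log_two_sin hA (by linarith)).comp t (hinA t)).mul_const u
    have d2 := ((hasDerivAt_neg_log_two_sin hB (by linarith)).comp t (hinB t)).mul_const v
    have d3 := ((hasDerivAt_neg_log_two_sin hC0 hCπ).comp t (hinC t)).mul_const (-u - v)
    exact (d1.add d2).add d3
  -- strict concavity of g on Icc 0 1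
  have key : StrictConcaveOn ℝ (Icc (0:ℝ) 1) g := by
    apply strictConcaveOn_of_deriv2_neg (convex_Icc 0 1)
    · intro t ht
      exact (hg' t ht).continuousAt.continuousWithinAt
    · intro t ht
      rw [interior_Icc] at ht
      have hev : deriv g =ᶠ[nhds t] G1 := by
        filter_upwards [Ioo_mem_nhds ht.1 ht.2] with s hs
        exact (hg' s (Ioo_subset_Icc_self hs)).deriv
      have h2 : deriv^[2] g t = deriv (deriv g) t := rfl
      rw [h2, Filter.EventuallyEq.deriv_eq hev, (hG1' t (Ioo_subset_Icc_self ht)).deriv]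
      obtain ⟨hA, hB, hC⟩ := hang t (Ioo_subset_Icc_self ht)
      have hq := quad_pos hA hB hC huv
      have heq : (-(Real.cos (x.1 + t*u) / Real.sin (x.1 + t*u))) * u * u
        + (-(Real.cos (x.2 + t*v) / Real.sin (x.2 + t*v))) * v * v
        + (-(Real.cos (π - (x.1 + t*u) - (x.2 + t*v)) / Real.sin (π - (x.1 + t*u) - (x.2 + t*v))))
          * (-u - v) * (-u - v)
        = -(u^2 * (Real.cos (x.1 + t*u) / Real.sin (x.1 + t*u))
            + v^2 * (Real.cos (x.2 + t*v) / Real.sin (x.2 + t*v))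
            + (u+v)^2 * (Real.cos (π - (x.1 + t*u) - (x.2 + t*v))
                / Real.sin (π - (x.1 + t*u) - (x.2 + t*v)))) := by ring
      rw [heq]
      linarith
  -- conclude
  have h01 : (0:ℝ) ≠ 1 := zero_ne_one
  have hmem0 : (0:ℝ) ∈ Icc (0:ℝ) 1 := ⟨le_refl 0, zero_le_one⟩
  have hmem1 : (1:ℝ) ∈ Icc (0:ℝ) 1 := ⟨zero_le_one, le_refl 1⟩
  have hfin := key.2 hmem0 hmem1 h01 ha hb hab
  simp only [smul_eq_mul, mul_zero, mul_one, zero_add] at hfin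
  have hg0 : g 0 = idealVol x := by
    simp [hg, idealVol]
  have hg1 : g 1 = idealVol y := by
    simp only [hg, one_mul, hu, hv, idealVol]
    ring_nf
  have hgb : g b = idealVol (a • x + b • y) := by
    have e1 : (a • x + b • y).1 = x.1 + b * u := by
      simp only [Prod.fst_add, Prod.smul_fst, smul_eq_mul, hu]
      linear_combination x.1 * hab
    have e2 : (a • x + b • y).2 = x.2 + b * v := by
      simp only [Prod.snd_add, Prod.smul_snd, smul_eq_mul, hv]
      linear_combination x.2 * hab
    simp [hg, idealVol, e1, e2]
  rw [hg0, hg1, hgb] at hfin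
  simpa using hfin
end
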